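/- arXiv:2301.08039 — 2 statements merged into one kernel-verified Lean document; each statement's English description precedes it below -/
import Mathlib

section
/- Let d ≥ 1, m > 0, and let u : ℝ^d → ℝ be differentiable with u ≥ 0 whose gradient h = ∇u satisfies ⟨h(x) − h(y), x − y⟩ ≥ 2m|x − y|² for all x, y ∈ ℝ^d. Then for every γ > 0 and every x ∈ ℝ^d, the tamed gradient satisfies ⟨h_{tam,γ}(x), x⟩ ≥ (m/2)|x|² − u(0). -/
open MeasureTheory Real

local notation "⟪" x ", " y "⟫" => @inner ℝ _ _ x y

/-- The taming of a vector field `h` with strong-convexity parameter `m` and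
taming parameter `γ`: with `f x = h x − (m/2) x`, the tamed field is
`f x + (m/2) x` if `|f x| ≤ √γ` and `2 f x / (1 + γ^{-1/2} |f x|) + (m/2) x` otherwise. -/
noncomputable def htam {E : Type*} [NormedAddCommGroup E] [NormedSpace ℝ E]
    (m γ : ℝ) (h : E → E) (x : E) : E :=
  (if ‖h x - (m / 2) • x‖ ≤ Real.sqrt γ then h x - (m / 2) • x
   else (2 / (1 + ‖h x - (m / 2) • x‖ / Real.sqrt γ)) • (h x - (m / 2) • x))
  + (m / 2) • x

theorem stmt_8 (d : ℕ) (hd : 1 ≤ d) (m : ℝ) (hm : 0 < m)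
    (u : EuclideanSpace ℝ (Fin d) → ℝ) (hdiff : Differentiable ℝ u)
    (hnonneg : ∀ x, 0 ≤ u x)
    (hsc : ∀ x y : EuclideanSpace ℝ (Fin d),
      ⟪gradient u x - gradient u y, x - y⟫ ≥ 2 * m * ‖x - y‖ ^ 2) :
    ∀ γ : ℝ, 0 < γ → ∀ x : EuclideanSpace ℝ (Fin d),
      ⟪htam m γ (gradient u) x, x⟫ ≥ m / 2 * ‖x‖ ^ 2 - u 0 := by
  intro γ hγ x
  set g := gradient u with hgdef
  -- Key inequality: ⟪g x, x⟫ ≥ m ‖x‖² − u 0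
  have key : ⟪g x, x⟫ ≥ m * ‖x‖ ^ 2 - u 0 := by
    set v : EuclideanSpace ℝ (Fin d) := -x with hv
    set C : ℝ := ⟪g x, v⟫ with hC
    set D : ℝ := m * ‖v‖ ^ 2 with hD
    set φ : ℝ → ℝ := fun t => u (x + t • v) - t * C - t ^ 2 * D with hφdef
    have hcurve : ∀ t : ℝ, HasDerivAt (fun t : ℝ => x + t • v) v t := by
      intro t
      simpa using ((hasDerivAt_id t).smul_const v).const_add x
    have hψ : ∀ t : ℝ, HasDerivAt (fun s => u (x + s • v)) ⟪g (x + t • v), v⟫ t := by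
      intro t
      have hgrad := (hdiff (x + t • v)).hasGradientAt
      have := hgrad.hasFDerivAt.comp_hasDerivAt t (hcurve t)
      exact this
    have hφ' : ∀ t : ℝ, HasDerivAt φ (⟪g (x + t • v), v⟫ - C - 2 * t * D) t := by
      intro t
      have h1 : HasDerivAt (fun t : ℝ => t * C) C t := by
        simpa using (hasDerivAt_id t).mul_const C
      have h2 : HasDerivAt (fun t : ℝ => t ^ 2 * D) (2 * t * D) t := by
        simpa [mul_comm] using (hasDerivAt_pow 2 t).mul_const D
      exact ((hψ t).sub h1).sub h2
    have hderivnn : ∀ t ∈ Set.Ioo (0 : ℝ) 1, 0 ≤ deriv φ t := by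
      intro t ht
      rw [(hφ' t).deriv]
      have hsc' := hsc (x + t • v) x
      have hsub : (x + t • v) - x = t • v := by abel
      rw [hsub] at hsc'
      rw [real_inner_smul_right] at hsc'
      have hnorm : ‖t • v‖ = t * ‖v‖ := by
        rw [norm_smul, Real.norm_eq_abs, abs_of_pos ht.1]
      rw [hnorm] at hsc'
      have ht0 := ht.1
      have h3 : 2 * t * D ≤ ⟪g (x + t • v), v⟫ - C := by
        refine le_of_mul_le_mul_left ?_ ht0
        calc t * (2 * t * D) = 2 * m * (t * ‖v‖) ^ 2 := by rw [hD]; ring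
          _ ≤ t * ⟪g (x + t • v) - g x, v⟫ := hsc'
          _ = t * (⟪g (x + t • v), v⟫ - C) := by rw [inner_sub_left, ← hC]
      linarith
    have hcont : ContinuousOn φ (Set.Icc (0 : ℝ) 1) :=
      fun t _ => ((hφ' t).differentiableAt.continuousAt).continuousWithinAt
    have hdiffOn : DifferentiableOn ℝ φ (Set.Ioo (0 : ℝ) 1) :=
      fun t _ => (hφ' t).differentiableAt.differentiableWithinAt
    have hmono : MonotoneOn φ (Set.Icc (0 : ℝ) 1) := by
      apply monotoneOn_of_deriv_nonneg (convex_Icc 0 1) hcont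
      · simpa [interior_Icc] using hdiffOn
      · simpa [interior_Icc] using hderivnn
    have h01 : φ 0 ≤ φ 1 := hmono (by norm_num) (by norm_num) (by norm_num)
    have hφ0 : φ 0 = u x := by simp [hφdef]
    have hφ1 : φ 1 = u 0 - C - D := by
      have h0 : x + (1 : ℝ) • v = 0 := by simp [hv]
      show u (x + (1:ℝ) • v) - 1 * C - 1 ^ 2 * D = u 0 - C - D
      rw [h0]; ring
    rw [hφ0, hφ1] at h01
    have hCx : C = -⟪g x, x⟫ := by rw [hC, hv, inner_neg_right]
    have hDx : D = m * ‖x‖ ^ 2 := by rw [hD, hv, norm_neg]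
    have hux := hnonneg x
    rw [hCx, hDx] at h01
    linarith
  -- Now unfold htam
  set f : EuclideanSpace ℝ (Fin d) := g x - (m / 2) • x with hf
  have hfx : ⟪f, x⟫ = ⟪g x, x⟫ - m / 2 * ‖x‖ ^ 2 := by
    rw [hf, inner_sub_left, real_inner_smul_left, real_inner_self_eq_norm_sq]
  have hfx_ge : ⟪f, x⟫ ≥ -u 0 := by
    have : (0 : ℝ) ≤ m / 2 * ‖x‖ ^ 2 := by positivity
    rw [hfx]; linarith
  have hsq : ⟪((m : ℝ) / 2) • x, x⟫ = m / 2 * ‖x‖ ^ 2 := by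
    rw [real_inner_smul_left, real_inner_self_eq_norm_sq]
  rw [htam, inner_add_left, hsq]
  by_cases hcase : ‖g x - (m / 2) • x‖ ≤ Real.sqrt γ
  · rw [if_pos hcase]
    rw [← hf]
    linarith [hfx_ge]
  · rw [if_neg hcase]
    rw [← hf, real_inner_smul_left]
    set c : ℝ := 2 / (1 + ‖f‖ / Real.sqrt γ) with hc
    have hsγ : 0 < Real.sqrt γ := Real.sqrt_pos.2 hγ
    have h1 : 1 < ‖f‖ / Real.sqrt γ := by
      rw [lt_div_iff₀ hsγ]
      rw [← hf] at hcase
      push_neg at hcase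
      linarith
    have hc0 : 0 < c := by
      apply div_pos (by norm_num)
      linarith
    have hc1 : c ≤ 1 := by
      rw [hc, div_le_one (by linarith)]
      linarith
    have hu0 := hnonneg 0
    nlinarith [hfx_ge, hc0, hc1, hu0, mul_nonneg hc0.le (by linarith [hfx_ge, hu0] : (0:ℝ) ≤ ⟪f, x⟫ + u 0)]
end

section
/- Let d ≥ 1, m > 0, let h : ℝ^d → ℝ^d be continuous, set f(x) = h(x) − (m/2)x, and let p > 0. Let X be an ℝ^d-valued random vector on a probability space (Ω, F, P) with E|f(X)|^{4p+4} < ∞. Then for every γ > 0, E|h_{tam,γ}(X) − h(X)|² ≤ (E|f(X)|^{4p+4})^{1/2} · γ^{−p}. -/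
open MeasureTheory Real

/-- Pointwise bound for the taming error. -/
lemma htam_pointwise {E : Type*} [NormedAddCommGroup E] [NormedSpace ℝ E]
    (m γ p : ℝ) (hγ : 0 < γ) (hp : 0 < p) (h : E → E) (x : E) :
    ‖htam m γ h x - h x‖ ^ 2 ≤ ‖h x - (m / 2) • x‖ ^ (2 * p + 2) * γ ^ (-p) := by
  have hkey : htam m γ h x - h x =
      (if ‖h x - (m / 2) • x‖ ≤ Real.sqrt γ then h x - (m / 2) • x
       else (2 / (1 + ‖h x - (m / 2) • x‖ / Real.sqrt γ)) • (h x - (m / 2) • x))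
        - (h x - (m / 2) • x) := by
    unfold htam
    abel
  set y := h x - (m / 2) • x with hy
  by_cases hc : ‖y‖ ≤ Real.sqrt γ
  · rw [hkey, if_pos hc]
    simp only [sub_self, norm_zero]
    rw [zero_pow (two_ne_zero)]
    positivity
  · rw [hkey, if_neg hc]
    push_neg at hc
    have hs : 0 < Real.sqrt γ := Real.sqrt_pos.2 hγ
    have hF : 0 < ‖y‖ := lt_trans hs hc
    have hr : 1 < ‖y‖ / Real.sqrt γ := (one_lt_div hs).2 hc
    set r := ‖y‖ / Real.sqrt γ with hrdef
    have h1r : 0 < 1 + r := by linarith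
    have hnorm : ‖(2 / (1 + r)) • y - y‖ ≤ ‖y‖ := by
      have : (2 / (1 + r)) • y - y = (2 / (1 + r) - 1) • y := by
        rw [sub_smul, one_smul]
      rw [this, norm_smul, Real.norm_eq_abs]
      have habs : |2 / (1 + r) - 1| ≤ 1 := by
        rw [abs_le]
        constructor
        · have h2 : 0 < 2 / (1 + r) := by positivity
          linarith
        · have : 2 / (1 + r) ≤ 1 := by
            rw [div_le_one h1r]; linarith
          linarith
      nlinarith [norm_nonneg y]
    have hsq : ‖(2 / (1 + r)) • y - y‖ ^ 2 ≤ ‖y‖ ^ 2 := by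
      have := norm_nonneg ((2 / (1 + r)) • y - y)
      nlinarith
    refine hsq.trans ?_
    -- ‖y‖^2 ≤ ‖y‖^(2p+2) * γ^(-p)
    have hsplit : ‖y‖ ^ (2 * p + 2) = ‖y‖ ^ (2 * p) * ‖y‖ ^ (2 : ℝ) := by
      rw [← Real.rpow_add hF]
    have h2 : ‖y‖ ^ (2 : ℝ) = ‖y‖ ^ (2 : ℕ) := by
      rw [← Real.rpow_natCast ‖y‖ 2]; norm_num
    have hge : γ ^ p ≤ ‖y‖ ^ (2 * p) := by
      have : Real.sqrt γ ^ (2 * p) ≤ ‖y‖ ^ (2 * p) :=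
        Real.rpow_le_rpow hs.le hc.le (by positivity)
      calc γ ^ p = (Real.sqrt γ) ^ (2 * p) := by
            rw [Real.sqrt_eq_rpow, ← Real.rpow_mul hγ.le]
            congr 1
            ring
        _ ≤ _ := this
    calc ‖y‖ ^ 2 = (γ ^ p * γ ^ (-p)) * ‖y‖ ^ (2 : ℕ) := by
          rw [← Real.rpow_add hγ]; simp
      _ ≤ (‖y‖ ^ (2 * p) * γ ^ (-p)) * ‖y‖ ^ (2 : ℕ) := by
          have hg : (0:ℝ) ≤ γ ^ (-p) := by positivity
          have hyn : (0:ℝ) ≤ ‖y‖ ^ (2 : ℕ) := by positivity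
          exact mul_le_mul_of_nonneg_right (mul_le_mul_of_nonneg_right hge hg) hyn
      _ = ‖y‖ ^ (2 * p + 2) * γ ^ (-p) := by
          rw [hsplit, h2]; ring

theorem stmt_10 (d : ℕ) (hd : 1 ≤ d) (m : ℝ) (hm : 0 < m)
    (h : EuclideanSpace ℝ (Fin d) → EuclideanSpace ℝ (Fin d)) (hcont : Continuous h)
    (p : ℝ) (hp : 0 < p)
    {Ω : Type*} [MeasurableSpace Ω] (P : Measure Ω) [IsProbabilityMeasure P]
    (X : Ω → EuclideanSpace ℝ (Fin d)) (hX : Measurable X)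
    (hmom : Integrable (fun ω => ‖h (X ω) - (m / 2) • X ω‖ ^ (4 * p + 4)) P) :
    ∀ γ : ℝ, 0 < γ →
      ∫ ω, ‖htam m γ h (X ω) - h (X ω)‖ ^ 2 ∂P ≤
        (∫ ω, ‖h (X ω) - (m / 2) • X ω‖ ^ (4 * p + 4) ∂P) ^ ((1 : ℝ) / 2) * γ ^ (-p) := by
  intro γ hγ
  set F : Ω → ℝ := fun ω => ‖h (X ω) - (m / 2) • X ω‖ with hFdef
  have hFmeas : Measurable F :=
    ((hcont.sub (continuous_const_smul (m / 2))).norm.measurable.comp hX :)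
  have hFnonneg : ∀ ω, 0 ≤ F ω := fun ω => norm_nonneg _
  set G : Ω → ℝ := fun ω => F ω ^ (2 * p + 2) with hGdef
  have hGmeas : Measurable G :=
    (Real.continuous_rpow_const (by positivity)).measurable.comp hFmeas
  have hGnonneg : ∀ ω, 0 ≤ G ω := fun ω => Real.rpow_nonneg (hFnonneg ω) _
  -- G² = F^(4p+4)
  have hGsq : ∀ ω, G ω ^ (2 : ℕ) = F ω ^ (4 * p + 4) := by
    intro ω
    rw [hGdef]
    rw [← Real.rpow_natCast (F ω ^ (2 * p + 2)) 2, ← Real.rpow_mul (hFnonneg ω)]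
    norm_num
    ring_nf
  have hGsq_int : Integrable (fun ω => G ω ^ (2 : ℕ)) P := by
    refine hmom.congr ?_
    filter_upwards with ω
    exact (hGsq ω).symm
  -- G is integrable (G ≤ 1 + G²)
  have hGint : Integrable G P := by
    refine Integrable.mono' ((integrable_const 1).add hGsq_int)
      hGmeas.aestronglyMeasurable ?_
    filter_upwards with ω
    rw [Real.norm_of_nonneg (hGnonneg ω)]
    simp only [Pi.add_apply]
    have h0 := hGnonneg ω
    nlinarith [sq_nonneg (G ω - 1)]
  -- Step 1: pointwise bound and monotonicity of the integral
  have hstep1 : ∫ ω, ‖htam m γ h (X ω) - h (X ω)‖ ^ 2 ∂P ≤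
      (∫ ω, G ω ∂P) * γ ^ (-p) := by
    rw [← integral_mul_const]
    refine integral_mono_of_nonneg ?_ (hGint.mul_const _) ?_
    · filter_upwards with ω; positivity
    · filter_upwards with ω
      exact htam_pointwise m γ p hγ hp h (X ω)
  refine hstep1.trans ?_
  have hγp : 0 ≤ γ ^ (-p) := by positivity
  refine mul_le_mul_of_nonneg_right ?_ hγp
  -- Step 2: Cauchy–Schwarz: ∫ G ≤ (∫ G²)^(1/2)
  have hpq : (2 : ℝ).HolderConjugate 2 := Real.HolderConjugate.two_two
  have hG2 : MemLp G (ENNReal.ofReal 2) P := by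
    have : MemLp G 2 P := (memLp_two_iff_integrable_sq hGmeas.aestronglyMeasurable).2
      (by simpa using hGsq_int)
    simpa [ENNReal.ofReal_ofNat] using this
  have hone : MemLp (fun _ : Ω => (1 : ℝ)) (ENNReal.ofReal 2) P := memLp_const 1
  have hCS := integral_mul_le_Lp_mul_Lq_of_nonneg hpq
    (Filter.Eventually.of_forall hGnonneg)
    (Filter.Eventually.of_forall fun _ => zero_le_one) hG2 hone
  simp only [mul_one] at hCS
  have hone_int : (∫ _ : Ω, (1:ℝ) ^ (2:ℝ) ∂P) ^ ((1:ℝ)/2) = 1 := by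
    simp
  rw [hone_int, mul_one] at hCS
  refine hCS.trans ?_
  have heq : ∀ ω, G ω ^ (2 : ℝ) = F ω ^ (4 * p + 4) := by
    intro ω
    rw [show (2:ℝ) = ((2:ℕ):ℝ) by norm_num, Real.rpow_natCast]
    exact hGsq ω
  rw [show (∫ a, G a ^ (2:ℝ) ∂P) = ∫ ω, F ω ^ (4 * p + 4) ∂P from
    integral_congr_ae (Filter.Eventually.of_forall heq)]
end
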